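/- Rubio de Francia iteration properties: let 1 ≤ p₀ < p < ∞ and define ℛh = Σ_{k=0}^∞ 2^{-k} ℳ_{p₀}^k h / ‖ℳ_{p₀}‖_{L^p→L^p}^k for nonnegative h ∈ L^p, where ℳ_{p₀}f = (ℳ(f^{p₀}))^{1/p₀} and ℳ is the maximal operator. Then: (A) h ≤ ℛh pointwise; (B) ‖ℛh‖_p ≤ 2‖h‖_p; (C) ℳ((ℛh)^{p₀}) ≤ 2^{p₀} ‖ℳ‖_{L^{p/p₀}→L^{p/p₀}} (ℛh)^{p₀} pointwise, i.e., [(ℛh)^{p₀}]_{A₁} ≤ 2^{p₀}‖ℳ‖_{L^{p/p₀}→L^{p/p₀}}. -/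

import Mathlib

open MeasureTheory
open scoped ENNReal

/-- The dyadic maximal operator `ℳ f = sup_{Q ∈ 𝒟, x ∈ Q} ⟨f⟩_{1,Q}`. -/
noncomputable def dMax {α : Type*} [MeasurableSpace α] (μ : Measure α)
    (𝒟 : Set (Set α)) (f : α → ℝ≥0∞) (x : α) : ℝ≥0∞ :=
  ⨆ Q ∈ 𝒟, ⨆ (_ : x ∈ Q), (μ Q)⁻¹ * ∫⁻ y in Q, f y ∂μ

/-- The `L^r → L^r` operator norm `‖ℳ‖_{L^r→L^r}` of the dyadic maximal operator. -/
noncomputable def dMaxNorm {α : Type*} [MeasurableSpace α] (μ : Measure α)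
    (𝒟 : Set (Set α)) (r : ℝ) : ℝ≥0∞ :=
  ⨆ f : α → ℝ≥0∞,
    (∫⁻ x, dMax μ 𝒟 f x ^ r ∂μ) ^ (1 / r) / (∫⁻ x, f x ^ r ∂μ) ^ (1 / r)

/-- `ℳ_{p₀} f = (ℳ(f^{p₀}))^{1/p₀}`. -/
noncomputable def dMaxP {α : Type*} [MeasurableSpace α] (μ : Measure α)
    (𝒟 : Set (Set α)) (p₀ : ℝ) (f : α → ℝ≥0∞) : α → ℝ≥0∞ :=
  fun x => (dMax μ 𝒟 (fun y => f y ^ p₀) x) ^ (1 / p₀)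

/-- The Rubio de Francia iteration
`ℛh = Σ_{k=0}^∞ 2^{-k} ℳ_{p₀}^k h / ‖ℳ_{p₀}‖_{L^p→L^p}^k`, where
`‖ℳ_{p₀}‖_{L^p→L^p} = ‖ℳ‖_{L^{p/p₀}→L^{p/p₀}}^{1/p₀}`. -/
noncomputable def rdf {α : Type*} [MeasurableSpace α] (μ : Measure α)
    (𝒟 : Set (Set α)) (p₀ p : ℝ) (h : α → ℝ≥0∞) : α → ℝ≥0∞ :=
  fun x => ∑' k : ℕ,
    ((dMaxP μ 𝒟 p₀)^[k] h) x / ((2 : ℝ≥0∞) ^ k * (dMaxNorm μ 𝒟 (p / p₀) ^ (1 / p₀)) ^ k)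

section RdFAux

variable {α : Type*} [MeasurableSpace α]

private lemma rdf_rpow_iSup {ι : Sort*} (f : ι → ℝ≥0∞) {y : ℝ} (hy : 0 < y) :
    (⨆ i, f i) ^ y = ⨆ i, f i ^ y := by
  exact (ENNReal.orderIsoRpow y hy).map_iSup f

private lemma measurable_dMax (μ : Measure α) {𝒟 : Set (Set α)} (hcount : 𝒟.Countable)
    (hmeas : ∀ Q ∈ 𝒟, MeasurableSet Q) (f : α → ℝ≥0∞) :
    Measurable (dMax μ 𝒟 f) := by
  apply Measurable.biSup 𝒟 hcount
  intro Q hQ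
  have : (fun x => ⨆ (_ : x ∈ Q), (μ Q)⁻¹ * ∫⁻ y in Q, f y ∂μ)
      = Q.indicator (fun _ => (μ Q)⁻¹ * ∫⁻ y in Q, f y ∂μ) := by
    funext x; by_cases hx : x ∈ Q <;> simp [hx]
  rw [this]
  exact measurable_const.indicator (hmeas Q hQ)

private lemma measurable_dMaxP (μ : Measure α) {𝒟 : Set (Set α)} (hcount : 𝒟.Countable)
    (hmeas : ∀ Q ∈ 𝒟, MeasurableSet Q) (p₀ : ℝ) (f : α → ℝ≥0∞) :
    Measurable (dMaxP μ 𝒟 p₀ f) :=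
  (measurable_dMax μ hcount hmeas _).pow measurable_const

/-- Boundedness of the maximal operator from the definition of the operator norm. -/
private lemma dMax_lp_le (μ : Measure α) (𝒟 : Set (Set α)) (r : ℝ)
    (h0 : dMaxNorm μ 𝒟 r ≠ 0) (ht : dMaxNorm μ 𝒟 r ≠ ⊤) (f : α → ℝ≥0∞) :
    (∫⁻ x, dMax μ 𝒟 f x ^ r ∂μ) ^ (1 / r) ≤
      dMaxNorm μ 𝒟 r * (∫⁻ x, f x ^ r ∂μ) ^ (1 / r) := by
  have hle : (∫⁻ x, dMax μ 𝒟 f x ^ r ∂μ) ^ (1 / r) / (∫⁻ x, f x ^ r ∂μ) ^ (1 / r)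
      ≤ dMaxNorm μ 𝒟 r := le_iSup (fun g : α → ℝ≥0∞ =>
        (∫⁻ x, dMax μ 𝒟 g x ^ r ∂μ) ^ (1 / r) / (∫⁻ x, g x ^ r ∂μ) ^ (1 / r)) f
  exact (ENNReal.div_le_iff_le_mul (Or.inr ht) (Or.inr h0)).mp hle

private lemma dMaxP_lp_le (μ : Measure α) (𝒟 : Set (Set α)) {p₀ p : ℝ}
    (hp₀ : 1 ≤ p₀) (hp : p₀ < p)
    (h0 : dMaxNorm μ 𝒟 (p / p₀) ≠ 0) (ht : dMaxNorm μ 𝒟 (p / p₀) ≠ ⊤) (f : α → ℝ≥0∞) :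
    (∫⁻ x, dMaxP μ 𝒟 p₀ f x ^ p ∂μ) ^ (1 / p) ≤
      dMaxNorm μ 𝒟 (p / p₀) ^ (1 / p₀) * (∫⁻ x, f x ^ p ∂μ) ^ (1 / p) := by
  have hp₀0 : (0 : ℝ) < p₀ := lt_of_lt_of_le one_pos hp₀
  have hp0 : (0 : ℝ) < p := lt_trans hp₀0 hp
  set r : ℝ := p / p₀ with hr
  have h1 : ∀ x : ℝ≥0∞, (x ^ (1 / p₀)) ^ p = x ^ r := by
    intro x
    rw [← ENNReal.rpow_mul]
    congr 1
    rw [hr]; ring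
  have h2 : ∀ x : ℝ≥0∞, x ^ p = (x ^ p₀) ^ r := by
    intro x
    rw [← ENNReal.rpow_mul]
    congr 1
    rw [hr]; field_simp
  have h3 : (1 : ℝ) / p = 1 / r * (1 / p₀) := by
    rw [hr, one_div_div]
    field_simp
  calc (∫⁻ x, dMaxP μ 𝒟 p₀ f x ^ p ∂μ) ^ (1 / p)
      = ((∫⁻ x, dMax μ 𝒟 (fun y => f y ^ p₀) x ^ r ∂μ) ^ (1 / r)) ^ (1 / p₀) := by
        rw [h3, ENNReal.rpow_mul]
        congr 2
        exact lintegral_congr fun x => h1 _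
    _ ≤ (dMaxNorm μ 𝒟 r * (∫⁻ x, (f x ^ p₀) ^ r ∂μ) ^ (1 / r)) ^ (1 / p₀) := by
        gcongr
        exact dMax_lp_le μ 𝒟 r h0 ht _
    _ = dMaxNorm μ 𝒟 r ^ (1 / p₀) * (∫⁻ x, f x ^ p ∂μ) ^ (1 / p) := by
        rw [ENNReal.mul_rpow_of_nonneg _ _ (one_div_pos.mpr hp₀0).le, h3, ENNReal.rpow_mul]
        congr 3
        exact (lintegral_congr fun x => h2 _).symm

/-- Countable Minkowski inequality for `ℝ≥0∞`-valued functions. -/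
private lemma lp_tsum_le (ν : Measure α) {q : ℝ} (hq : 1 ≤ q) (f : ℕ → α → ℝ≥0∞)
    (hf : ∀ k, Measurable (f k)) :
    (∫⁻ x, (∑' k, f k x) ^ q ∂ν) ^ (1 / q) ≤ ∑' k, (∫⁻ x, f k x ^ q ∂ν) ^ (1 / q) := by
  have hq0 : (0 : ℝ) < q := lt_of_lt_of_le one_pos hq
  have hS : ∀ n, Measurable fun x => ∑ k ∈ Finset.range n, f k x := fun n =>
    Finset.measurable_sum _ fun k _ => hf k
  have fin : ∀ n, (∫⁻ x, (∑ k ∈ Finset.range n, f k x) ^ q ∂ν) ^ (1 / q)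
      ≤ ∑ k ∈ Finset.range n, (∫⁻ x, f k x ^ q ∂ν) ^ (1 / q) := by
    intro n
    induction n with
    | zero =>
      have h0 : (∫⁻ x, (∑ k ∈ Finset.range 0, f k x) ^ q ∂ν) = 0 := by
        simp [ENNReal.zero_rpow_of_pos hq0]
      rw [h0, ENNReal.zero_rpow_of_pos (one_div_pos.mpr hq0)]
      simp
    | succ n ih =>
      have step := ENNReal.lintegral_Lp_add_le (μ := ν)
        (hS n).aemeasurable (hf n).aemeasurable hq
      calc (∫⁻ x, (∑ k ∈ Finset.range (n+1), f k x) ^ q ∂ν) ^ (1 / q)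
          = (∫⁻ x, ((fun y => ∑ k ∈ Finset.range n, f k y) + f n) x ^ q ∂ν) ^ (1 / q) := by
            congr 1
            exact lintegral_congr fun x => by simp [Finset.sum_range_succ]
        _ ≤ (∫⁻ x, (∑ k ∈ Finset.range n, f k x) ^ q ∂ν) ^ (1 / q)
              + (∫⁻ x, f n x ^ q ∂ν) ^ (1 / q) := step
        _ ≤ ∑ k ∈ Finset.range (n+1), (∫⁻ x, f k x ^ q ∂ν) ^ (1 / q) := by
            rw [Finset.sum_range_succ]
            exact add_le_add ih le_rfl
  have mono : Monotone fun n => fun x => (∑ k ∈ Finset.range n, f k x) ^ q := by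
    intro n m hnm x
    exact ENNReal.rpow_le_rpow (Finset.sum_le_sum_of_subset
      (Finset.range_subset_range.mpr hnm)) hq0.le
  have key : (∫⁻ x, (∑' k, f k x) ^ q ∂ν)
      = ⨆ n, ∫⁻ x, (∑ k ∈ Finset.range n, f k x) ^ q ∂ν := by
    rw [← lintegral_iSup (fun n => (hS n).pow measurable_const) mono]
    exact lintegral_congr fun x => by
      rw [ENNReal.tsum_eq_iSup_nat, rdf_rpow_iSup _ hq0]
  rw [key, rdf_rpow_iSup _ (one_div_pos.mpr hq0)]
  exact iSup_le fun n => (fin n).trans (ENNReal.sum_le_tsum _)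

private lemma lp_const_mul (ν : Measure α) {q : ℝ} (hq : 0 < q) {c : ℝ≥0∞} (hc : c ≠ ⊤)
    (f : α → ℝ≥0∞) :
    (∫⁻ x, (c * f x) ^ q ∂ν) ^ (1 / q) = c * (∫⁻ x, f x ^ q ∂ν) ^ (1 / q) := by
  simp only [ENNReal.mul_rpow_of_nonneg _ _ hq.le]
  rw [lintegral_const_mul' _ _ (ENNReal.rpow_ne_top_of_nonneg hq.le hc),
    ENNReal.mul_rpow_of_nonneg _ _ (one_div_pos.mpr hq).le, ← ENNReal.rpow_mul,
    mul_one_div_cancel hq.ne', ENNReal.rpow_one]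

private lemma dMax_const_mul (μ : Measure α) (𝒟 : Set (Set α)) {c : ℝ≥0∞} (hc : c ≠ ⊤)
    (g : α → ℝ≥0∞) (x : α) :
    dMax μ 𝒟 (fun y => c * g y) x = c * dMax μ 𝒟 g x := by
  unfold dMax
  simp only [lintegral_const_mul' c _ hc, ENNReal.mul_iSup]
  congr 1; funext Q; congr 1; funext hQ; congr 1; funext hx
  rw [mul_left_comm]

private lemma dMaxP_const_mul (μ : Measure α) (𝒟 : Set (Set α)) {p₀ : ℝ} (hp₀ : 1 ≤ p₀)
    {c : ℝ≥0∞} (hc : c ≠ ⊤) (f : α → ℝ≥0∞) (x : α) :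
    dMaxP μ 𝒟 p₀ (fun y => c * f y) x = c * dMaxP μ 𝒟 p₀ f x := by
  have hp₀0 : (0 : ℝ) < p₀ := lt_of_lt_of_le one_pos hp₀
  unfold dMaxP
  have h1 : (fun y => (c * f y) ^ p₀) = fun y => c ^ p₀ * f y ^ p₀ := by
    funext y; exact ENNReal.mul_rpow_of_nonneg _ _ hp₀0.le
  rw [h1, dMax_const_mul μ 𝒟 (ENNReal.rpow_ne_top_of_nonneg hp₀0.le hc) _ x,
    ENNReal.mul_rpow_of_nonneg _ _ (one_div_pos.mpr hp₀0).le, ← ENNReal.rpow_mul,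
    mul_one_div_cancel hp₀0.ne', ENNReal.rpow_one]

/-- Pointwise countable Minkowski inequality for `ℳ_{p₀}`. -/
private lemma dMaxP_tsum_le (μ : Measure α) (𝒟 : Set (Set α)) {p₀ : ℝ} (hp₀ : 1 ≤ p₀)
    (f : ℕ → α → ℝ≥0∞) (hf : ∀ k, Measurable (f k)) (x : α) :
    dMaxP μ 𝒟 p₀ (fun y => ∑' k, f k y) x ≤ ∑' k, dMaxP μ 𝒟 p₀ (f k) x := by
  have hp₀0 : (0 : ℝ) < p₀ := lt_of_lt_of_le one_pos hp₀
  set C : ℝ≥0∞ := ∑' k, dMaxP μ 𝒟 p₀ (f k) x with hC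
  suffices hsuf : dMax μ 𝒟 (fun y => (∑' k, f k y) ^ p₀) x ≤ C ^ p₀ by
    have := ENNReal.rpow_le_rpow hsuf (one_div_pos.mpr hp₀0).le
    rwa [← ENNReal.rpow_mul, mul_one_div_cancel hp₀0.ne', ENNReal.rpow_one] at this
  apply iSup₂_le
  intro Q hQ
  apply iSup_le
  intro hx
  set ν : Measure α := (μ Q)⁻¹ • μ.restrict Q with hν
  have havg : ∀ g : α → ℝ≥0∞, (μ Q)⁻¹ * ∫⁻ y in Q, g y ∂μ = ∫⁻ y, g y ∂ν := by
    intro g; rw [hν, lintegral_smul_measure, smul_eq_mul]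
  rw [havg]
  have step1 : (∫⁻ y, (∑' k, f k y) ^ p₀ ∂ν) ^ (1 / p₀)
      ≤ ∑' k, (∫⁻ y, f k y ^ p₀ ∂ν) ^ (1 / p₀) := lp_tsum_le ν hp₀ f hf
  have step2 : ∑' k, (∫⁻ y, f k y ^ p₀ ∂ν) ^ (1 / p₀) ≤ C := by
    apply ENNReal.tsum_le_tsum
    intro k
    rw [← havg]
    apply ENNReal.rpow_le_rpow _ (one_div_pos.mpr hp₀0).le
    apply le_iSup₂_of_le Q hQ
    exact le_iSup_of_le hx le_rfl
  have := ENNReal.rpow_le_rpow (step1.trans step2) hp₀0.le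
  rwa [← ENNReal.rpow_mul, one_div_mul_cancel hp₀0.ne', ENNReal.rpow_one] at this

end RdFAux

/-- Rubio de Francia iteration properties: for `1 ≤ p₀ < p < ∞` and `0 ≤ h ∈ L^p`,
(A) `h ≤ ℛh`; (B) `‖ℛh‖_p ≤ 2‖h‖_p`;
(C) `ℳ((ℛh)^{p₀}) ≤ 2^{p₀} ‖ℳ‖_{L^{p/p₀}→L^{p/p₀}} (ℛh)^{p₀}` pointwise, i.e.
`[(ℛh)^{p₀}]_{A₁} ≤ 2^{p₀} ‖ℳ‖_{L^{p/p₀}→L^{p/p₀}}`. -/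
theorem stmt_19 {α : Type*} [MeasurableSpace α] (μ : Measure α)
    (𝒟 : Set (Set α)) (hcount : 𝒟.Countable)
    (hmeas : ∀ Q ∈ 𝒟, MeasurableSet Q)
    (hfin : ∀ Q ∈ 𝒟, 0 < μ Q ∧ μ Q < ⊤)
    (hnest : ∀ Q ∈ 𝒟, ∀ Q' ∈ 𝒟, Disjoint Q Q' ∨ Q ⊆ Q' ∨ Q' ⊆ Q)
    (p₀ p : ℝ) (hp₀ : 1 ≤ p₀) (hp : p₀ < p)
    -- the maximal operator is bounded on `L^{p/p₀}`
    (hMbdd : 0 < dMaxNorm μ 𝒟 (p / p₀) ∧ dMaxNorm μ 𝒟 (p / p₀) < ⊤)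
    (h : α → ℝ≥0∞) (hmeas_h : Measurable h) (hLp : ∫⁻ x, h x ^ p ∂μ < ⊤) :
    (∀ x, h x ≤ rdf μ 𝒟 p₀ p h x) ∧
      (∫⁻ x, rdf μ 𝒟 p₀ p h x ^ p ∂μ) ^ (1 / p) ≤ 2 * (∫⁻ x, h x ^ p ∂μ) ^ (1 / p) ∧
      ∀ x, dMax μ 𝒟 (fun y => rdf μ 𝒟 p₀ p h y ^ p₀) x ≤
        (2 : ℝ≥0∞) ^ p₀ * dMaxNorm μ 𝒟 (p / p₀) * rdf μ 𝒟 p₀ p h x ^ p₀ := by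
  obtain ⟨hN0, hNT⟩ := hMbdd
  have hp₀0 : (0 : ℝ) < p₀ := lt_of_lt_of_le one_pos hp₀
  have hp0 : (0 : ℝ) < p := lt_trans hp₀0 hp
  have hp1 : (1 : ℝ) ≤ p := le_of_lt (lt_of_le_of_lt hp₀ hp)
  set N : ℝ≥0∞ := dMaxNorm μ 𝒟 (p / p₀) with hNdef
  set M : ℝ≥0∞ := N ^ (1 / p₀) with hMdef
  have hM0 : M ≠ 0 := by
    rw [hMdef]
    simp [ENNReal.rpow_eq_zero_iff, hN0.ne', hNT.ne, hp₀0, hp₀0.not_gt]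
  have hMT : M ≠ ⊤ := ENNReal.rpow_ne_top_of_nonneg (one_div_pos.mpr hp₀0).le hNT.ne
  set D : ℝ≥0∞ := 2 * M with hDdef
  have hD0 : D ≠ 0 := by
    rw [hDdef]; exact mul_ne_zero two_ne_zero hM0
  have hDT : D ≠ ⊤ := by
    rw [hDdef]; exact ENNReal.mul_ne_top ENNReal.ofNat_ne_top hMT
  have hDinvT : D⁻¹ ≠ ⊤ := ENNReal.inv_ne_top.mpr hD0
  -- iterates of the maximal operator are measurable
  have hiter : ∀ k, Measurable ((dMaxP μ 𝒟 p₀)^[k] h) := by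
    intro k
    induction k with
    | zero => simpa using hmeas_h
    | succ k ih =>
      rw [Function.iterate_succ_apply']
      exact measurable_dMaxP μ hcount hmeas p₀ _
  -- the summands
  set a : ℕ → α → ℝ≥0∞ := fun k x => D⁻¹ ^ k * ((dMaxP μ 𝒟 p₀)^[k] h) x with hadef
  have ha_meas : ∀ k, Measurable (a k) := fun k => (hiter k).const_mul _
  have hrdf : ∀ x, rdf μ 𝒟 p₀ p h x = ∑' k, a k x := by
    intro x
    unfold rdf
    refine tsum_congr fun k => ?_
    rw [hadef]
    rw [← hNdef, ← hMdef, ← mul_pow, ← hDdef, div_eq_mul_inv, ENNReal.inv_pow, mul_comm]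
  -- Part A
  have partA : ∀ x, h x ≤ rdf μ 𝒟 p₀ p h x := by
    intro x
    rw [hrdf x]
    have h0 := ENNReal.le_tsum (f := fun k => a k x) 0
    simpa [hadef] using h0
  refine ⟨partA, ?_, ?_⟩
  · -- Part B
    have hiterL : ∀ k, (∫⁻ x, ((dMaxP μ 𝒟 p₀)^[k] h) x ^ p ∂μ) ^ (1 / p)
        ≤ M ^ k * (∫⁻ x, h x ^ p ∂μ) ^ (1 / p) := by
      intro k
      induction k with
      | zero => simp
      | succ k ih =>
        calc (∫⁻ x, ((dMaxP μ 𝒟 p₀)^[k+1] h) x ^ p ∂μ) ^ (1 / p)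
            = (∫⁻ x, dMaxP μ 𝒟 p₀ ((dMaxP μ 𝒟 p₀)^[k] h) x ^ p ∂μ) ^ (1 / p) := by
              rw [Function.iterate_succ_apply']
          _ ≤ M * (∫⁻ x, ((dMaxP μ 𝒟 p₀)^[k] h) x ^ p ∂μ) ^ (1 / p) :=
              dMaxP_lp_le μ 𝒟 hp₀ hp hN0.ne' hNT.ne _
          _ ≤ M * (M ^ k * (∫⁻ x, h x ^ p ∂μ) ^ (1 / p)) := mul_le_mul_right ih M
          _ = M ^ (k+1) * (∫⁻ x, h x ^ p ∂μ) ^ (1 / p) := by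
              rw [← mul_assoc, pow_succ, mul_comm (M ^ k) M]
    have hak : ∀ k, (∫⁻ x, a k x ^ p ∂μ) ^ (1 / p)
        ≤ 2⁻¹ ^ k * (∫⁻ x, h x ^ p ∂μ) ^ (1 / p) := by
      intro k
      have hDk : D⁻¹ ^ k ≠ ⊤ := by
        exact (ENNReal.pow_ne_top hDinvT)
      calc (∫⁻ x, a k x ^ p ∂μ) ^ (1 / p)
          = D⁻¹ ^ k * (∫⁻ x, ((dMaxP μ 𝒟 p₀)^[k] h) x ^ p ∂μ) ^ (1 / p) :=
            lp_const_mul μ hp0 hDk _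
        _ ≤ D⁻¹ ^ k * (M ^ k * (∫⁻ x, h x ^ p ∂μ) ^ (1 / p)) :=
            mul_le_mul_right (hiterL k) _
        _ = (D⁻¹ * M) ^ k * (∫⁻ x, h x ^ p ∂μ) ^ (1 / p) := by
            rw [← mul_assoc, ← mul_pow]
        _ = 2⁻¹ ^ k * (∫⁻ x, h x ^ p ∂μ) ^ (1 / p) := by
            congr 2
            rw [hDdef, ENNReal.mul_inv (Or.inr hMT) (Or.inr hM0), mul_assoc,
              ENNReal.inv_mul_cancel hM0 hMT, mul_one]
    calc (∫⁻ x, rdf μ 𝒟 p₀ p h x ^ p ∂μ) ^ (1 / p)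
        = (∫⁻ x, (∑' k, a k x) ^ p ∂μ) ^ (1 / p) := by
          congr 1; exact lintegral_congr fun x => by rw [hrdf x]
      _ ≤ ∑' k, (∫⁻ x, a k x ^ p ∂μ) ^ (1 / p) := lp_tsum_le μ hp1 a ha_meas
      _ ≤ ∑' k, 2⁻¹ ^ k * (∫⁻ x, h x ^ p ∂μ) ^ (1 / p) := ENNReal.tsum_le_tsum hak
      _ = 2 * (∫⁻ x, h x ^ p ∂μ) ^ (1 / p) := by
          rw [ENNReal.tsum_mul_right, ENNReal.tsum_geometric, ENNReal.one_sub_inv_two, inv_inv]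
  · -- Part C
    have hCpt : ∀ x, dMaxP μ 𝒟 p₀ (rdf μ 𝒟 p₀ p h) x ≤ D * rdf μ 𝒟 p₀ p h x := by
      intro x
      have h1 : rdf μ 𝒟 p₀ p h = fun y => ∑' k, a k y := funext hrdf
      rw [h1]
      calc dMaxP μ 𝒟 p₀ (fun y => ∑' k, a k y) x
          ≤ ∑' k, dMaxP μ 𝒟 p₀ (a k) x := dMaxP_tsum_le μ 𝒟 hp₀ a ha_meas x
        _ = ∑' k, D⁻¹ ^ k * ((dMaxP μ 𝒟 p₀)^[k+1] h) x := by
            refine tsum_congr fun k => ?_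
            have : a k = fun y => D⁻¹ ^ k * ((dMaxP μ 𝒟 p₀)^[k] h) y := rfl
            rw [this, dMaxP_const_mul μ 𝒟 hp₀ (ENNReal.pow_ne_top hDinvT) _ x,
              Function.iterate_succ_apply']
        _ = D * ∑' k, a (k+1) x := by
            rw [← ENNReal.tsum_mul_left]
            refine tsum_congr fun k => ?_
            rw [hadef]
            rw [← mul_assoc]
            congr 1
            rw [pow_succ', ← mul_assoc, ENNReal.mul_inv_cancel hD0 hDT, one_mul]
        _ ≤ D * ∑' k, a k x := by
            apply mul_le_mul_right
            rw [tsum_eq_zero_add' (f := fun k => a k x) ENNReal.summable]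
            exact le_add_self
        _ = D * (fun y => ∑' k, a k y) x := rfl
    intro x
    have hkey : dMax μ 𝒟 (fun y => rdf μ 𝒟 p₀ p h y ^ p₀) x
        = dMaxP μ 𝒟 p₀ (rdf μ 𝒟 p₀ p h) x ^ p₀ := by
      unfold dMaxP
      rw [← ENNReal.rpow_mul, one_div, inv_mul_cancel₀ hp₀0.ne', ENNReal.rpow_one]
    rw [hkey]
    calc dMaxP μ 𝒟 p₀ (rdf μ 𝒟 p₀ p h) x ^ p₀
        ≤ (D * rdf μ 𝒟 p₀ p h x) ^ p₀ := ENNReal.rpow_le_rpow (hCpt x) hp₀0.le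
      _ = (2 : ℝ≥0∞) ^ p₀ * N * rdf μ 𝒟 p₀ p h x ^ p₀ := by
          rw [hDdef, ENNReal.mul_rpow_of_nonneg _ _ hp₀0.le,
            ENNReal.mul_rpow_of_nonneg _ _ hp₀0.le, hMdef, ← ENNReal.rpow_mul,
            one_div_mul_cancel hp₀0.ne', ENNReal.rpow_one]
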